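/- Let G = (V, E) be an edge-labeled DAG with labels c : E → ℝ and let (j,k) ∈ E be an edge whose source j is not a source of G. Let G' be obtained by back elimination of (j,k): for every predecessor i of j, the label of edge (i,k) becomes c(i,k) + c(j,k)·c(i,j) if (i,k) ∈ E and otherwise the fill edge (i,k) with label c(j,k)·c(i,j) is inserted; the edge (j,k) is removed; and if j thereby has no remaining outgoing edges, j is removed together with all its incoming edges. Then for every source s and sink t of G, the path sums agree: J_{G'}(s, t) = J_G(s, t). -/

import Mathlib

open scoped Classical

/-- A path from `s` to `t`: a nonempty sequence of consecutive edges, recorded as the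
list of its vertices (at least two of them, consecutive ones related by `R`). -/
def IsPath {α : Type*} (R : α → α → Prop) (s t : α) (p : List α) : Prop :=
  2 ≤ p.length ∧ p.Chain' R ∧ p.head? = some s ∧ p.getLast? = some t

/-- The path sum `J_G(s,t)`: the sum over all paths from `s` to `t` of the product of
the edge labels along the path (an empty sum is `0`). -/
noncomputable def pathSum {α : Type*} (R : α → α → Prop) (c : α → α → ℝ) (s t : α) : ℝ :=
  ∑' p : {p : List α // IsPath R s t p},
    ((p.1.zip p.1.tail).map (fun e => c e.1 e.2)).prod

/-- Adjacency after back elimination of the edge `(j,k)`: for every predecessor `i` of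
`j` the (possibly fill) edge `(i,k)` is inserted, the edge `(j,k)` is removed, and if
`j` thereby has no outgoing edges left, `j` is removed (isolated) together with its
incoming edges. -/
def backAdj {V : Type*} [Fintype V] [DecidableEq V] (A : V → V → Bool) (j k : V) :
    V → V → Bool :=
  fun x y =>
    let A1 : V → V → Bool := fun x y =>
      if x = j ∧ y = k then false else (A x y || (A x j && decide (y = k)))
    if ∀ w, w ≠ k → A j w = false then
      (A1 x y && !decide (x = j) && !decide (y = j))
    else A1 x y

/-- Labels after back elimination of `(j,k)`: for every predecessor `i` of `j` the
label of `(i,k)` becomes `c i k + c j k * c i j` if `(i,k)` was an edge and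
`c j k * c i j` for a fill edge; all other edges keep their labels. -/
noncomputable def backLab {V : Type*} [DecidableEq V] (A : V → V → Bool)
    (c : V → V → ℝ) (j k : V) : V → V → ℝ :=
  fun x y =>
    if y = k ∧ A x j then
      (if A x y then c x y + c j y * c x j else c j y * c x j)
    else c x y

namespace BackElimAux

set_option linter.unusedSectionVars false

variable {V : Type*} [Fintype V] [DecidableEq V]

noncomputable def wt (c : V → V → ℝ) (p : List V) : ℝ :=
  ((p.zip p.tail).map (fun e => c e.1 e.2)).prod

noncomputable def mat (R : V → V → Prop) (c : V → V → ℝ) : Matrix V V ℝ :=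
  Matrix.of fun x y => if R x y then c x y else 0

lemma mat_apply (R : V → V → Prop) (c : V → V → ℝ) (x y : V) :
    mat R c x y = if R x y then c x y else 0 := rfl

lemma pathSet_finite (R : V → V → Prop) {f : V → ℕ} (hacyc : ∀ a b, R a b → f a < f b)
    (s t : V) : {p : List V | IsPath R s t p}.Finite := by
  apply (List.finite_length_le V (Fintype.card V)).subset
  rintro p ⟨hlen, hch, -, -⟩
  have hch' : p.Chain' (fun a b => f a < f b) := List.IsChain.imp (fun a b h => hacyc a b h) hch
  haveI : IsTrans V (fun a b => f a < f b) := ⟨fun _ _ _ h1 h2 => lt_trans h1 h2⟩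
  have hpw : p.Pairwise (fun a b => f a < f b) := List.isChain_iff_pairwise.mp hch'
  have hnd : p.Nodup := hpw.imp (fun h => by rintro rfl; exact lt_irrefl _ h)
  exact hnd.length_le_card

lemma pathSum_eq_sum (R : V → V → Prop) (c : V → V → ℝ) {f : V → ℕ}
    (hacyc : ∀ a b, R a b → f a < f b) (s t : V) :
    pathSum R c s t = ∑ p ∈ (pathSet_finite R hacyc s t).toFinset, wt c p := by
  have h1 : pathSum R c s t = ∑' p : {p : List V | IsPath R s t p}, wt c p := rfl
  rw [h1, tsum_subtype]
  rw [tsum_eq_sum (s := (pathSet_finite R hacyc s t).toFinset)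
    (fun b hb => Set.indicator_of_notMem (by simpa using hb) _)]
  exact Finset.sum_congr rfl fun p hp => Set.indicator_of_mem (by simpa using hp) _

lemma pathSum_rec (R : V → V → Prop) (c : V → V → ℝ) {f : V → ℕ}
    (hacyc : ∀ a b, R a b → f a < f b) (s t : V) :
    pathSum R c s t
      = ∑ v : V, mat R c s v * ((if v = t then 1 else 0) + pathSum R c v t) := by
  classical
  set F := (pathSet_finite R hacyc s t).toFinset with hF
  have hfib : ∀ v : V, F.filter (fun p => p.tail.head? = some v)
      = if R s v then
          (Finset.image (fun q => s :: q) (pathSet_finite R hacyc v t).toFinset)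
            ∪ (if v = t then {[s, t]} else (∅ : Finset (List V)))
        else ∅ := by
    intro v
    ext p
    simp only [Finset.mem_filter, hF, Set.Finite.mem_toFinset, Set.mem_setOf_eq]
    constructor
    · rintro ⟨⟨hlen, hch, hhd, hlast⟩, htl⟩
      match p with
      | [] => simp at hhd
      | [a] => simp at hlen
      | a :: b :: q2 =>
        have ha : s = a := (by simpa using hhd : a = s).symm
        have hb : v = b := (by simpa using htl : b = v).symm
        subst ha; subst hb
        have hRsv : R s v := (List.isChain_cons_cons.mp hch).1
        rw [if_pos hRsv]
        match q2 with
        | [] =>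
          have hvt : v = t := by simpa using hlast
          subst hvt
          simp [Finset.mem_union]
        | w :: q3 =>
          apply Finset.mem_union_left
          rw [Finset.mem_image]
          refine ⟨v :: w :: q3, ?_, rfl⟩
          rw [Set.Finite.mem_toFinset]
          refine ⟨by simp, (List.isChain_cons_cons.mp hch).2, rfl, ?_⟩
          simpa [List.getLast?_cons_cons] using hlast
    · intro hp
      by_cases hRsv : R s v
      · rw [if_pos hRsv] at hp
        rcases Finset.mem_union.mp hp with hp | hp
        · rw [Finset.mem_image] at hp
          obtain ⟨q, hq, rfl⟩ := hp
          rw [Set.Finite.mem_toFinset] at hq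
          obtain ⟨hlen, hch, hhd, hlast⟩ := hq
          match q with
          | [] => simp at hhd
          | b :: q' =>
            have hb : v = b := (by simpa using hhd : b = v).symm
            subst hb
            match q' with
            | [] => simp at hlen
            | w :: q3 =>
              refine ⟨⟨by simp, List.isChain_cons_cons.mpr ⟨hRsv, hch⟩, rfl, ?_⟩, rfl⟩
              simpa [List.getLast?_cons_cons] using hlast
        · by_cases hvt : v = t
          · rw [if_pos hvt] at hp
            subst hvt
            have : p = [s, v] := by simpa using hp
            subst this
            exact ⟨⟨by simp, List.isChain_pair.mpr hRsv, rfl, by simp⟩, rfl⟩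
          · rw [if_neg hvt] at hp
            simp at hp
      · rw [if_neg hRsv] at hp
        simp at hp
  have hnone : F.filter (fun p => p.tail.head? = none) = ∅ := by
    ext p
    simp only [Finset.mem_filter, hF, Set.Finite.mem_toFinset, Set.mem_setOf_eq,
      Finset.notMem_empty, iff_false, not_and]
    rintro ⟨hlen, -, -, -⟩ htl
    rw [List.head?_eq_none_iff] at htl
    have h1 : p.tail.length = 0 := by simp [htl]
    have h2 := List.length_tail (l := p)
    omega
  have hsum : ∀ v : V, (∑ p ∈ F.filter (fun p => p.tail.head? = some v), wt c p)
      = mat R c s v * ((if v = t then 1 else 0) + pathSum R c v t) := by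
    intro v
    rw [hfib v]
    by_cases hRsv : R s v
    · rw [if_pos hRsv]
      have hdisj : Disjoint
          (Finset.image (fun q => s :: q) (pathSet_finite R hacyc v t).toFinset)
          (if v = t then ({[s, t]} : Finset (List V)) else ∅) := by
        by_cases hvt : v = t
        · rw [if_pos hvt]
          rw [Finset.disjoint_singleton_right, Finset.mem_image]
          rintro ⟨q, hq, heq⟩
          rw [Set.Finite.mem_toFinset] at hq
          obtain ⟨hlen, -, -, -⟩ := hq
          have : q = [t] := by
            have := congrArg List.tail heq
            simpa using this
          subst this
          simp at hlen
        · rw [if_neg hvt]; exact Finset.disjoint_empty_right _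
      rw [Finset.sum_union hdisj]
      have himg : ∑ p ∈ Finset.image (fun q => s :: q) (pathSet_finite R hacyc v t).toFinset,
          wt c p = ∑ q ∈ (pathSet_finite R hacyc v t).toFinset, wt c (s :: q) :=
        Finset.sum_image (fun x _ y _ h => by simpa using h)
      have hper : ∀ q ∈ (pathSet_finite R hacyc v t).toFinset, wt c (s :: q) = c s v * wt c q := by
        intro q hq
        rw [Set.Finite.mem_toFinset] at hq
        obtain ⟨hlen, -, hhd, -⟩ := hq
        match q with
        | [] => simp at hhd
        | b :: q' =>
          have hb : b = v := by simpa using hhd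
          subst hb
          simp [wt]
      rw [himg, Finset.sum_congr rfl hper, ← Finset.mul_sum]
      rw [← pathSum_eq_sum R c hacyc v t]
      have hsingle : (∑ p ∈ (if v = t then ({[s, t]} : Finset (List V)) else ∅), wt c p)
          = if v = t then c s t else 0 := by
        by_cases hvt : v = t
        · rw [if_pos hvt, if_pos hvt, Finset.sum_singleton]
          simp [wt]
        · rw [if_neg hvt, if_neg hvt, Finset.sum_empty]
      rw [hsingle]
      have hm : mat R c s v = c s v := by simp [mat, hRsv]
      rw [hm]
      by_cases hvt : v = t
      · subst hvt; rw [if_pos rfl, if_pos rfl]; ring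
      · rw [if_neg hvt, if_neg hvt]; ring
    · rw [if_neg hRsv, Finset.sum_empty]
      have hm : mat R c s v = 0 := by simp [mat, hRsv]
      rw [hm, zero_mul]
  rw [pathSum_eq_sum R c hacyc s t, ← hF]
  rw [← Finset.sum_fiberwise_of_maps_to (g := fun p : List V => p.tail.head?)
    (t := (Finset.univ : Finset (Option V))) (fun p _ => Finset.mem_univ _) (wt c)]
  rw [Fintype.sum_option]
  rw [hnone, Finset.sum_empty, zero_add]
  exact Finset.sum_congr rfl fun v _ => hsum v

lemma pow_entry_bound {M : Matrix V V ℝ} {f : V → ℕ}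
    (h : ∀ x y, M x y ≠ 0 → f x < f y) :
    ∀ n x y, (M ^ n) x y ≠ 0 → f x + n ≤ f y := by
  intro n
  induction n with
  | zero =>
    intro x y hxy
    simp only [pow_zero] at hxy
    rcases eq_or_ne x y with rfl | hne
    · simp
    · exact absurd (Matrix.one_apply_ne hne) hxy
  | succ n ih =>
    intro x y hxy
    rw [pow_succ'] at hxy
    rw [Matrix.mul_apply] at hxy
    obtain ⟨v, -, hv⟩ := Finset.exists_ne_zero_of_sum_ne_zero hxy
    have h1 : M x v ≠ 0 := fun h0 => hv (by simp [h0])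
    have h2 : (M ^ n) v y ≠ 0 := fun h0 => hv (by simp [h0])
    have := h x v h1
    have := ih v y h2
    omega

lemma pow_eq_zero {M : Matrix V V ℝ} {f : V → ℕ}
    (h : ∀ x y, M x y ≠ 0 → f x < f y) {n : ℕ} (hn : Finset.univ.sup f < n) :
    M ^ n = 0 := by
  ext x y
  by_contra hne
  have h1 := pow_entry_bound h n x y hne
  have h2 : f y ≤ Finset.univ.sup f := Finset.le_sup (Finset.mem_univ y)
  omega

lemma geom_unique (M : Matrix V V ℝ) (f : V → ℕ)
    (hsupp : ∀ x y, M x y ≠ 0 → f x < f y)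
    (g : V → V → ℝ)
    (hrec : ∀ s t, g s t = ∑ v : V, M s v * ((if v = t then 1 else 0) + g v t))
    (hpowzero : ∀ n, Finset.univ.sup f < n → M ^ n = 0) :
    ∀ s t, g s t = ∑ n ∈ Finset.range (Finset.univ.sup f + 1), (M ^ (n + 1)) s t := by
  set B := Finset.univ.sup f + 1 with hB
  set h : V → V → ℝ := fun s t => ∑ n ∈ Finset.range B, (M ^ (n + 1)) s t with hh
  have hrec' : ∀ s t, h s t = ∑ v : V, M s v * ((if v = t then 1 else 0) + h v t) := by
    intro s t
    have expand : ∀ v, M s v * ((if v = t then 1 else 0) + h v t)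
        = M s v * (if v = t then 1 else 0) + ∑ n ∈ Finset.range B, M s v * (M ^ (n + 1)) v t := by
      intro v; rw [mul_add, Finset.mul_sum]
    rw [Finset.sum_congr rfl (fun v _ => expand v), Finset.sum_add_distrib]
    have h1 : (∑ v : V, M s v * (if v = t then 1 else 0)) = M s t := by
      rw [Finset.sum_eq_single t]
      · simp
      · intro v _ hv; simp [hv]
      · intro habs; exact absurd (Finset.mem_univ t) habs
    have h2 : (∑ v : V, ∑ n ∈ Finset.range B, M s v * (M ^ (n + 1)) v t)
        = ∑ n ∈ Finset.range B, (M ^ (n + 1 + 1)) s t := by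
      rw [Finset.sum_comm]
      refine Finset.sum_congr rfl fun n _ => ?_
      rw [pow_succ' M (n + 1), Matrix.mul_apply]
    rw [h1, h2]
    have e1 := Finset.sum_range_succ (fun n => (M ^ (n + 1)) s t) B
    have e2 := Finset.sum_range_succ' (fun n => (M ^ (n + 1)) s t) B
    have hz : (M ^ (B + 1)) = 0 := hpowzero _ (by omega)
    rw [hz] at e1
    simp only [Matrix.zero_apply, add_zero, pow_one] at e1 e2
    show ∑ n ∈ Finset.range B, (M ^ (n + 1)) s t = _
    rw [← e1, e2, zero_add, pow_one]
    exact add_comm _ _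
  have key : ∀ m : ℕ, ∀ s t : V, B ≤ f s + m → g s t = h s t := by
    intro m
    induction m with
    | zero =>
      intro s t hst
      exfalso
      have : f s ≤ Finset.univ.sup f := Finset.le_sup (Finset.mem_univ s)
      omega
    | succ m ih =>
      intro s t hst
      rw [hrec s t, hrec' s t]
      refine Finset.sum_congr rfl fun v _ => ?_
      by_cases hMv : M s v = 0
      · rw [hMv]; ring
      · have hfv : f s < f v := hsupp s v hMv
        rw [ih v t (by omega)]
  intro s t
  have : f s ≤ Finset.univ.sup f := Finset.le_sup (Finset.mem_univ s)
  exact key B s t (by omega)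

lemma pathSum_eq_geom (R : V → V → Prop) (c : V → V → ℝ) {f : V → ℕ}
    (hacyc : ∀ a b, R a b → f a < f b) :
    ∀ s t, pathSum R c s t
      = ∑ n ∈ Finset.range (Finset.univ.sup f + 1), ((mat R c) ^ (n + 1)) s t := by
  have hsupp : ∀ x y, mat R c x y ≠ 0 → f x < f y := by
    intro x y h
    by_cases hR : R x y
    · exact hacyc x y hR
    · exact absurd (by simp [mat, hR]) h
  exact geom_unique (mat R c) f hsupp (pathSum R c)
    (fun s t => pathSum_rec R c hacyc s t)
    (fun n hn => pow_eq_zero hsupp hn)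

end BackElimAux

/-- **Back edge elimination preserves source-to-sink path sums**: if `(j,k)` is an
edge of the edge-labeled dag `G` whose source `j` is not a source of `G`, then for
every source `s` and sink `t` of `G`, `J_{G'}(s,t) = J_G(s,t)` where `G'` is obtained
from `G` by back elimination of `(j,k)`. -/
theorem back_elimination_preserves_path_sums
    {V : Type*} [Fintype V] [DecidableEq V]
    (A : V → V → Bool) (c : V → V → ℝ)
    (f : V → ℕ) (hacyc : ∀ a b, A a b = true → f a < f b)
    (j k : V) (hjk : A j k = true) (hnotsource : ∃ i, A i j = true) :
    ∀ s t : V, (∀ u, A u s = false) → (∀ w, A t w = false) →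
      pathSum (fun a b => backAdj A j k a b = true) (backLab A c j k) s t
        = pathSum (fun a b => A a b = true) c s t := by
  classical
  intro s t hs ht
  obtain ⟨i0, hi0⟩ := hnotsource
  have hsj : s ≠ j := by
    rintro rfl
    rw [hs i0] at hi0; exact Bool.false_ne_true hi0
  have htj : t ≠ j := by
    rintro rfl
    rw [ht k] at hjk; exact Bool.false_ne_true hjk
  have hjkne : j ≠ k := by
    rintro rfl
    exact lt_irrefl _ (hacyc j j hjk)
  have hAjj : A j j = false := by
    cases hA : A j j
    · rfl
    · exact absurd (hacyc j j hA) (lt_irrefl _)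
  have hacyc' : ∀ a b, backAdj A j k a b = true → f a < f b := by
    intro a b h
    have hA1 : (if a = j ∧ b = k then false
        else (A a b || (A a j && decide (b = k)))) = true := by
      by_cases hiso : ∀ w, w ≠ k → A j w = false
      · have heq : backAdj A j k a b
            = ((if a = j ∧ b = k then false
                else (A a b || (A a j && decide (b = k)))) && !decide (a = j) && !decide (b = j)) := by
          simp only [backAdj, if_pos hiso]
        rw [heq] at h
        simp only [Bool.and_eq_true] at h
        exact h.1.1
      · have heq : backAdj A j k a b
            = (if a = j ∧ b = k then false
                else (A a b || (A a j && decide (b = k)))) := by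
          simp only [backAdj, if_neg hiso]
        rw [heq] at h
        exact h
    by_cases hc : a = j ∧ b = k
    · rw [if_pos hc] at hA1; exact absurd hA1 Bool.false_ne_true
    · rw [if_neg hc] at hA1
      simp only [Bool.or_eq_true, Bool.and_eq_true] at hA1
      rcases hA1 with h1 | h1
      · exact hacyc a b h1
      · obtain ⟨h2, h3⟩ := h1
        have hkb : k = b := (of_decide_eq_true h3).symm
        subst hkb
        exact lt_trans (hacyc a j h2) (hacyc j k hjk)
  -- matrices
  set M : Matrix V V ℝ := BackElimAux.mat (fun a b => A a b = true) c with hM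
  set M' : Matrix V V ℝ :=
    BackElimAux.mat (fun a b => backAdj A j k a b = true) (backLab A c j k) with hM'
  set W : Matrix V V ℝ := Matrix.single j k (c j k) with hW
  set N : Matrix V V ℝ := M + (M - 1) * W with hN
  have hMtrue : ∀ x y, A x y = true → M x y = c x y := by
    intro x y h; rw [hM, BackElimAux.mat_apply]; simp [h]
  have hMfalse : ∀ x y, A x y = false → M x y = 0 := by
    intro x y h; rw [hM, BackElimAux.mat_apply]; simp [h]
  have hM'app : ∀ x y,
      M' x y = if backAdj A j k x y = true then backLab A c j k x y else 0 := by
    intro x y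
    cases hb : backAdj A j k x y <;> rw [hM', BackElimAux.mat_apply] <;> simp [hb]
  have hMjj : M j j = 0 := hMfalse j j hAjj
  have hMjk : M j k = c j k := hMtrue j k hjk
  have hNapp : ∀ x y, N x y
      = M x y + (if y = k then (M x j - if x = j then 1 else 0) * c j k else 0) := by
    intro x y
    rw [hN, hW]
    simp only [Matrix.add_apply]
    congr 1
    by_cases hyk : y = k
    · have hky : k = y := hyk.symm
      subst hky
      rw [Matrix.mul_single_apply_same, if_pos rfl]
      simp [Matrix.sub_apply, Matrix.one_apply]
    · rw [Matrix.mul_single_apply_of_ne (c j k) j k x y hyk, if_neg hyk]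
  -- core entry computation
  have hcore : ∀ x y,
      (if (if x = j ∧ y = k then false
            else (A x y || (A x j && decide (y = k)))) = true
        then backLab A c j k x y else 0) = N x y := by
    intro x y
    rw [hNapp]
    by_cases hyk : y = k
    · have hky : k = y := hyk.symm
      subst hky
      rw [if_pos rfl]
      by_cases hxj : x = j
      · have hjx : j = x := hxj.symm
        subst hjx
        rw [hMjk, hMjj, if_pos (⟨rfl, rfl⟩ : j = j ∧ k = k), if_pos (rfl : j = j)]
        simp only [Bool.false_eq_true, if_false]
        ring
      · rw [if_neg (show ¬(x = j ∧ k = k) from fun h => hxj h.1), if_neg hxj, sub_zero]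
        have hd : (decide (k = k)) = true := decide_eq_true rfl
        rw [hd]
        cases hAxj : A x j
        · simp only [Bool.false_and, Bool.or_false]
          rw [hMfalse x j hAxj, zero_mul, add_zero]
          have hlab : backLab A c j k x k = c x k := by
            simp [backLab, hAxj]
          cases hAxk : A x k
          · rw [hMfalse x k hAxk]
            simp
          · rw [hMtrue x k hAxk]
            simp [hlab]
        · simp only [Bool.and_true, Bool.or_true]
          rw [if_pos trivial]
          have hlab : backLab A c j k x k
              = if A x k then c x k + c j k * c x j else c j k * c x j := by
            simp [backLab, hAxj]
          rw [hlab, hMtrue x j hAxj]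
          cases hAxk : A x k
          · rw [hMfalse x k hAxk]
            simp only [Bool.false_eq_true, if_false]
            ring
          · rw [hMtrue x k hAxk, if_pos (show (true : Bool) = true from rfl)]
            ring
    · rw [if_neg hyk]
      rw [if_neg (show ¬(x = j ∧ y = k) from fun h => hyk h.2)]
      have hd : (decide (y = k)) = false := decide_eq_false hyk
      rw [hd]
      simp only [Bool.and_false, Bool.or_false]
      have hlab : backLab A c j k x y = c x y := by
        simp [backLab, hyk]
      rw [hlab, add_zero]
      cases hAxy : A x y
      · rw [hMfalse x y hAxy]
        simp [hAxy]
      · rw [hMtrue x y hAxy]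
        simp [hAxy]
  -- relate powers of M' and N at entry (s, t)
  have hpowst : ∀ n : ℕ, (M' ^ (n + 1)) s t = (N ^ (n + 1)) s t := by
    by_cases hiso : ∀ w, w ≠ k → A j w = false
    · -- isolated case
      have hrow : ∀ y, N j y = 0 := by
        intro y
        rw [hNapp]
        by_cases hyk : y = k
        · have hky : k = y := hyk.symm
          subst hky
          rw [if_pos rfl, hMjk, hMjj, if_pos rfl]
          ring
        · rw [if_neg hyk, hMfalse j y (hiso y hyk), add_zero]
      set Pm : Matrix V V ℝ := 1 - Matrix.single j j (1 : ℝ) with hPm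
      have hM'NP : M' = N * Pm := by
        ext x y
        have hrhs : (N * Pm) x y = if y = j then 0 else N x y := by
          rw [hPm, Matrix.mul_sub, Matrix.mul_one, Matrix.sub_apply]
          by_cases hyj : y = j
          · have hjy : j = y := hyj.symm
            subst hjy
            rw [Matrix.mul_single_apply_same, if_pos rfl]
            ring
          · rw [Matrix.mul_single_apply_of_ne (1 : ℝ) j j x y hyj, if_neg hyj, sub_zero]
        rw [hrhs, hM'app]
        have hadj : backAdj A j k x y
            = ((if x = j ∧ y = k then false
                else (A x y || (A x j && decide (y = k)))) && !decide (x = j) && !decide (y = j)) := by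
          simp only [backAdj, if_pos hiso]
        rw [hadj]
        by_cases hyj : y = j
        · rw [if_pos hyj]
          simp [hyj]
        · rw [if_neg hyj]
          by_cases hxj : x = j
          · have hjx : j = x := hxj.symm
            subst hjx
            rw [hrow y]
            simp
          · have hb : ((if x = j ∧ y = k then false
                else (A x y || (A x j && decide (y = k)))) && !decide (x = j) && !decide (y = j))
                = (if x = j ∧ y = k then false
                else (A x y || (A x j && decide (y = k)))) := by
              simp [hxj, hyj]
            rw [hb]
            exact hcore x y
      have hPmN : Pm * N = N := by
        rw [hPm, Matrix.sub_mul, Matrix.one_mul]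
        have hz : Matrix.single j j (1 : ℝ) * N = 0 := by
          ext x y
          by_cases hxj : x = j
          · have hjx : j = x := hxj.symm
            subst hjx
            rw [Matrix.single_mul_apply_same, hrow y]
            simp
          · rw [Matrix.single_mul_apply_of_ne (1 : ℝ) j j x y hxj]
            simp
        rw [hz, sub_zero]
      have hpows : ∀ n : ℕ, M' ^ (n + 1) = N ^ (n + 1) * Pm := by
        intro n
        induction n with
        | zero => rw [pow_one, pow_one, hM'NP]
        | succ n ih =>
          rw [pow_succ, ih, hM'NP, pow_succ]
          calc N ^ (n + 1) * Pm * (N * Pm) = N ^ (n + 1) * (Pm * N) * Pm := by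
                rw [Matrix.mul_assoc, Matrix.mul_assoc, Matrix.mul_assoc]
            _ = N ^ (n + 1) * N * Pm := by rw [hPmN]
      intro n
      rw [hpows n, hPm, Matrix.mul_sub, Matrix.mul_one, Matrix.sub_apply,
        Matrix.mul_single_apply_of_ne (1 : ℝ) j j s t htj, sub_zero]
    · -- non-isolated case
      have hM'N : M' = N := by
        ext x y
        rw [hM'app]
        have hadj : backAdj A j k x y
            = (if x = j ∧ y = k then false
                else (A x y || (A x j && decide (y = k)))) := by
          simp only [backAdj, if_neg hiso]
        rw [hadj]
        exact hcore x y
      intro n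
      rw [hM'N]
  -- support bounds
  have hsuppM : ∀ x y, M x y ≠ 0 → f x < f y := by
    intro x y h
    cases hA : A x y
    · exact absurd (hMfalse x y hA) h
    · exact hacyc x y hA
  have hsuppN : ∀ x y, N x y ≠ 0 → f x < f y := by
    intro x y h
    rw [hNapp] at h
    by_cases hyk : y = k
    · have hky : k = y := hyk.symm
      subst hky
      by_cases hxj : x = j
      · have hjx : j = x := hxj.symm
        subst hjx
        rw [if_pos rfl, hMjk, hMjj, if_pos rfl] at h
        exact absurd (by ring) h
      · rw [if_pos rfl, if_neg hxj, sub_zero] at h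
        by_cases hMxk : M x k = 0
        · rw [hMxk, zero_add] at h
          have hMxj : M x j ≠ 0 := fun h0 => h (by rw [h0]; ring)
          exact lt_trans (hsuppM x j hMxj) (hacyc j k hjk)
        · exact hsuppM x k hMxk
    · rw [if_neg hyk, add_zero] at h
      exact hsuppM x y h
  set B : ℕ := Finset.univ.sup f + 1 with hB
  -- geometric sums
  set S : Matrix V V ℝ := ∑ n ∈ Finset.range B, M ^ n with hS
  set S' : Matrix V V ℝ := ∑ n ∈ Finset.range B, N ^ n with hS'
  have hMB : M ^ B = 0 := BackElimAux.pow_eq_zero hsuppM (by omega)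
  have hNB : N ^ B = 0 := BackElimAux.pow_eq_zero hsuppN (by omega)
  have hSM : S * (1 - M) = 1 := by
    have h := geom_sum_mul M B
    rw [hMB] at h
    calc S * (1 - M) = -(S * (M - 1)) := by noncomm_ring
      _ = -((0 : Matrix V V ℝ) - 1) := by rw [← h, hS]
      _ = 1 := by noncomm_ring
  have h1MS : (1 - M) * S = 1 := by
    have h := mul_geom_sum M B
    rw [hMB] at h
    calc (1 - M) * S = -((M - 1) * S) := by noncomm_ring
      _ = -((0 : Matrix V V ℝ) - 1) := by rw [← h, hS]
      _ = 1 := by noncomm_ring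
  have hS'N1 : S' * (1 - N) = 1 := by
    have h := geom_sum_mul N B
    rw [hNB] at h
    calc S' * (1 - N) = -(S' * (N - 1)) := by noncomm_ring
      _ = -((0 : Matrix V V ℝ) - 1) := by rw [← h, hS']
      _ = 1 := by noncomm_ring
  have hW2 : W * W = 0 := by
    rw [hW]
    exact Matrix.single_mul_single_of_ne (c j k) j k j (Ne.symm hjkne) (c j k)
  have hfact : 1 - N = (1 - M) * (1 + W) := by
    rw [hN]; noncomm_ring
  have hkey : S' = (1 - W) * S := by
    have hWW : (1 + W) * (1 - W) = 1 := by
      have h1 : (1 + W) * (1 - W) = 1 - W * W := by noncomm_ring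
      rw [hW2, sub_zero] at h1
      exact h1
    have hinv : (1 - N) * ((1 - W) * S) = 1 := by
      rw [hfact]
      calc (1 - M) * (1 + W) * ((1 - W) * S)
          = (1 - M) * (((1 + W) * (1 - W)) * S) := by noncomm_ring
        _ = (1 - M) * S := by rw [hWW, one_mul]
        _ = 1 := h1MS
    calc S' = S' * ((1 - N) * ((1 - W) * S)) := by rw [hinv, mul_one]
      _ = (S' * (1 - N)) * ((1 - W) * S) := by noncomm_ring
      _ = (1 - W) * S := by rw [hS'N1, one_mul]
  have hSMid : S * M = S - 1 := by
    calc S * M = S - S * (1 - M) := by noncomm_ring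
      _ = S - 1 := by rw [hSM]
  have hS'Nid : S' * N = S' - 1 := by
    calc S' * N = S' - S' * (1 - N) := by noncomm_ring
      _ = S' - 1 := by rw [hS'N1]
  -- final computation
  have hgeomG := BackElimAux.pathSum_eq_geom (fun a b => A a b = true) c hacyc s t
  have hgeomG' := BackElimAux.pathSum_eq_geom
    (fun a b => backAdj A j k a b = true) (backLab A c j k) hacyc' s t
  rw [hgeomG, hgeomG', ← hM, ← hM', ← hB]
  have hsumM' : ∑ n ∈ Finset.range B, (M' ^ (n + 1)) s t
      = ∑ n ∈ Finset.range B, (N ^ (n + 1)) s t :=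
    Finset.sum_congr rfl fun n _ => hpowst n
  rw [hsumM']
  have hTN : ∑ n ∈ Finset.range B, N ^ (n + 1) = S' * N := by
    rw [hS', Finset.sum_mul]
    exact Finset.sum_congr rfl fun n _ => (pow_succ N n).symm
  have hTM : ∑ n ∈ Finset.range B, M ^ (n + 1) = S * M := by
    rw [hS, Finset.sum_mul]
    exact Finset.sum_congr rfl fun n _ => (pow_succ M n).symm
  have hentN : (∑ n ∈ Finset.range B, N ^ (n + 1)) s t
      = ∑ n ∈ Finset.range B, (N ^ (n + 1)) s t := by
    simp [Matrix.sum_apply]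
  have hentM : (∑ n ∈ Finset.range B, M ^ (n + 1)) s t
      = ∑ n ∈ Finset.range B, (M ^ (n + 1)) s t := by
    simp [Matrix.sum_apply]
  rw [← hentN, ← hentM, hTN, hTM, hS'Nid, hSMid, hkey]
  have hWS : ((1 - W) * S - 1) = (S - 1) - W * S := by noncomm_ring
  rw [hWS]
  simp only [Matrix.sub_apply]
  have hWS0 : (W * S) s t = 0 := by
    rw [hW]
    exact Matrix.single_mul_apply_of_ne (c j k) j k s t hsj S
  rw [hWS0, sub_zero]
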